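/- Let k be an infinite field, m ≥ 2n, and τ an endomorphism of k^m such that every eigenvalue λ ≠ 1 of τ over the algebraic closure has eigenspace of dimension at most m − n, and the eigenspace for eigenvalue 1 also has dimension at most m − n. Then there exists an n-dimensional subspace V of k^m such that for all v₁, v₂ ∈ V, τ(v₁) = v₂ implies v₁ = v₂ = 0. -/

import Mathlib

open Module Submodule

section Aux

variable {k : Type*} [Field k] {W : Type*} [AddCommGroup W] [Module k W]

/-- Dual functional to a linearly independent family. -/
theorem exists_dual_fun {ι : Type*} {v : ι → W} (hv : LinearIndependent k v) (i0 : ι) :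
    ∃ φ : W →ₗ[k] k, φ (v i0) = 1 ∧ ∀ j, j ≠ i0 → φ (v j) = 0 := by
  classical
  have hs := hv.linearIndepOn_id
  let b := Basis.extend hs
  have hmem : ∀ i, v i ∈ hs.extend (Set.subset_univ _) :=
    fun i => hs.subset_extend _ ⟨i, rfl⟩
  refine ⟨b.coord ⟨v i0, hmem i0⟩, ?_, ?_⟩
  · have hb : b ⟨v i0, hmem i0⟩ = v i0 := Basis.extend_apply_self hs _
    have h2 : (b.coord ⟨v i0, hmem i0⟩) (b ⟨v i0, hmem i0⟩) = 1 := by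
      rw [Basis.coord_apply, Basis.repr_self, Finsupp.single_eq_same]
    rwa [hb] at h2
  · intro j hj
    have hb : b ⟨v j, hmem j⟩ = v j := Basis.extend_apply_self hs _
    have hne : (⟨v j, hmem j⟩ : {x // x ∈ hs.extend (Set.subset_univ _)}) ≠ ⟨v i0, hmem i0⟩ := by
      intro e
      exact hj (hv.injective (congrArg Subtype.val e))
    have h2 : (b.coord ⟨v i0, hmem i0⟩) (b ⟨v j, hmem j⟩) = 0 := by
      rw [Basis.coord_apply, Basis.repr_self, Finsupp.single_eq_of_ne hne.symm]
    rwa [hb] at h2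

/-- Over an infinite field, finitely many proper subspaces cannot cover the space. -/
theorem exists_avoid [Infinite k] (s : Finset (Submodule k W)) (hs : ∀ p ∈ s, p ≠ ⊤) :
    ∃ u : W, ∀ p ∈ s, u ∉ p := by
  classical
  induction s using Finset.induction_on with
  | empty => exact ⟨0, by simp⟩
  | @insert p s hps ih =>
    obtain ⟨u, hu⟩ := ih (fun q hq => hs q (Finset.mem_insert_of_mem hq))
    by_cases hup : u ∉ p
    · refine ⟨u, fun q hq => ?_⟩
      rcases Finset.mem_insert.1 hq with rfl | hq
      · exact hup
      · exact hu q hq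
    push_neg at hup
    have hpt : p ≠ ⊤ := hs p (Finset.mem_insert_self _ _)
    have : ∃ w : W, w ∉ p := by
      by_contra hall
      push_neg at hall
      exact hpt (Submodule.eq_top_iff'.2 hall)
    obtain ⟨w, hw⟩ := this
    have hbad : (⋃ q ∈ (insert p s : Finset (Submodule k W)), {t : k | u + t • w ∈ q}).Finite := by
      refine Set.Finite.biUnion (Finset.finite_toSet _) (fun q hq => ?_)
      rcases Finset.mem_insert.1 hq with rfl | hq'
      · -- bad set for p is a subsingleton
        refine Set.Subsingleton.finite (fun t1 h1 t2 h2 => ?_)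
        by_contra hne
        have : (t1 - t2) • w ∈ q := by
          have := Submodule.sub_mem q h1 h2
          simpa [sub_smul] using this
        have hw' : w ∈ q := by
          have h12 : (t1 - t2) ≠ 0 := sub_ne_zero.2 hne
          simpa [smul_smul, inv_mul_cancel₀ h12] using Submodule.smul_mem q (t1 - t2)⁻¹ this
        exact hw hw'
      · refine Set.Subsingleton.finite (fun t1 h1 t2 h2 => ?_)
        by_contra hne
        have : (t1 - t2) • w ∈ q := by
          have := Submodule.sub_mem q h1 h2
          simpa [sub_smul] using this
        have hw' : w ∈ q := by
          have h12 : (t1 - t2) ≠ 0 := sub_ne_zero.2 hne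
          simpa [smul_smul, inv_mul_cancel₀ h12] using Submodule.smul_mem q (t1 - t2)⁻¹ this
        have : u ∈ q := by
          have := Submodule.sub_mem q h1 (Submodule.smul_mem q t1 hw')
          simpa using this
        exact hu q hq' this
    obtain ⟨t, ht⟩ := (hbad.infinite_compl).nonempty
    refine ⟨u + t • w, fun q hq hmemq => ?_⟩
    exact ht (Set.mem_biUnion hq hmemq)

/-- If every vector `w` satisfies a nontrivial dependence `a•w + b•τw ∈ U`, and `U` has
codimension at least 2, then `τ` is scalar modulo `U`. -/
theorem lemA [FiniteDimensional k W] (τ : Module.End k W) (U : Submodule k W)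
    (hdim : Module.finrank k U + 2 ≤ Module.finrank k W)
    (hdep : ∀ w : W, ∃ a b : k, (a ≠ 0 ∨ b ≠ 0) ∧ a • w + b • τ w ∈ U) :
    ∃ l : k, LinearMap.range (τ - l • 1) ≤ U := by
  classical
  set π := U.mkQ with hπdef
  have hπ0 : ∀ z : W, π z = 0 ↔ z ∈ U := by
    intro z; rw [hπdef, Submodule.mkQ_apply, Submodule.Quotient.mk_eq_zero]
  have hline : ∀ w : W, π w ≠ 0 → ∃ c : k, π (τ w) = c • π w := by
    intro w hw
    obtain ⟨a, b, hab, hmem⟩ := hdep w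
    have heq : a • π w + b • π (τ w) = 0 := by
      rw [← map_smul, ← map_smul, ← map_add]
      exact (hπ0 _).2 hmem
    by_cases hb : b = 0
    · exfalso
      have ha : a ≠ 0 := by tauto
      rw [hb, zero_smul, add_zero] at heq
      exact hw (by simpa [ha] using congrArg (fun z => a⁻¹ • z) heq)
    · refine ⟨-(b⁻¹ * a), ?_⟩
      have : b • π (τ w) = -(a • π w) := by
        rw [eq_neg_iff_add_eq_zero, add_comm]; exact heq
      have := congrArg (fun z => b⁻¹ • z) this
      simpa [smul_smul, inv_mul_cancel₀ hb, neg_smul, mul_assoc] using this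
  -- two independent vectors in the quotient
  have hQ : 2 ≤ finrank k (W ⧸ U) := by
    have := Submodule.finrank_quotient_add_finrank U
    omega
  let bQ := Module.finBasis k (W ⧸ U)
  let i0 : Fin (finrank k (W ⧸ U)) := ⟨0, by omega⟩
  let i1 : Fin (finrank k (W ⧸ U)) := ⟨1, by omega⟩
  obtain ⟨w1, hw1⟩ := Submodule.mkQ_surjective U (bQ i0)
  obtain ⟨w2, hw2⟩ := Submodule.mkQ_surjective U (bQ i1)
  have hpair : ∀ a b : k, a • π w1 + b • π w2 = 0 → a = 0 ∧ b = 0 := by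
    intro a b hab
    rw [hw1, hw2] at hab
    have := congrArg bQ.repr hab
    rw [map_add, map_smul, map_smul, Basis.repr_self, Basis.repr_self, map_zero] at this
    have h01 : i0 ≠ i1 := by simp [i0, i1, Fin.ext_iff]
    constructor
    · have := DFunLike.congr_fun this i0
      simpa [Finsupp.single_apply, h01, Ne.symm h01] using this
    · have := DFunLike.congr_fun this i1
      simpa [Finsupp.single_apply, h01, Ne.symm h01] using this
  have hw1n : π w1 ≠ 0 := fun h => by
    have := hpair 1 0 (by rw [h]; simp)
    exact one_ne_zero this.1
  have hw2n : π w2 ≠ 0 := fun h => by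
    have := hpair 0 1 (by rw [h]; simp)
    exact one_ne_zero this.2
  have hw12n : π (w1 + w2) ≠ 0 := fun h => by
    have := hpair 1 1 (by rw [map_add] at h; simpa using h)
    exact one_ne_zero this.1
  obtain ⟨c1, hc1⟩ := hline w1 hw1n
  obtain ⟨c2, hc2⟩ := hline w2 hw2n
  obtain ⟨c3, hc3⟩ := hline (w1 + w2) hw12n
  have hc12 : c1 = c3 ∧ c2 = c3 := by
    have : (c1 - c3) • π w1 + (c2 - c3) • π w2 = 0 := by
      have hτ : π (τ (w1 + w2)) = π (τ w1) + π (τ w2) := by rw [map_add, map_add]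
      rw [hτ, map_add, smul_add] at hc3
      linear_combination (norm := module) hc3 - hc1 - hc2
    have := hpair _ _ this
    constructor
    · exact sub_eq_zero.1 this.1
    · exact sub_eq_zero.1 this.2
  set l0 := c3 with hl0
  have hτw1 : π (τ w1) = l0 • π w1 := by rw [hc1, hc12.1]
  have hτw2 : π (τ w2) = l0 • π w2 := by rw [hc2, hc12.2]
  -- every vector satisfies π (τ w) = l0 • π w
  have hstep : ∀ z w : W, π (τ z) = l0 • π z →
      (∀ a b : k, a • π w + b • π z = 0 → a = 0 ∧ b = 0) →
      π (τ w) = l0 • π w := by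
    intro z w hz hind
    have hwn : π w ≠ 0 := fun h => one_ne_zero (hind 1 0 (by rw [h]; simp)).1
    have hwzn : π (w + z) ≠ 0 := fun h => by
      have := hind 1 1 (by rw [map_add] at h; simpa using h)
      exact one_ne_zero this.1
    obtain ⟨c, hc⟩ := hline w hwn
    obtain ⟨e, he⟩ := hline (w + z) hwzn
    have : (c - e) • π w + (l0 - e) • π z = 0 := by
      have hτ : π (τ (w + z)) = π (τ w) + π (τ z) := by rw [map_add, map_add]
      rw [hτ, map_add, smul_add] at he
      linear_combination (norm := module) he - hc - hz
    have h2 := hind _ _ this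
    have hce : c = e := sub_eq_zero.1 h2.1
    have hle : l0 = e := sub_eq_zero.1 h2.2
    rw [hc, hce, ← hle]
  have main : ∀ w : W, π (τ w) = l0 • π w := by
    intro w
    by_cases h0 : π w = 0
    · -- show π (τ w) = 0
      have e1 : π (w + w1) = π w1 := by rw [map_add, h0, zero_add]
      have e2 : π (w + w2) = π w2 := by rw [map_add, h0, zero_add]
      obtain ⟨d1, hd1⟩ := hline (w + w1) (by rw [e1]; exact hw1n)
      obtain ⟨d2, hd2⟩ := hline (w + w2) (by rw [e2]; exact hw2n)
      rw [e1] at hd1; rw [e2] at hd2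
      have f1 : π (τ w) = (d1 - l0) • π w1 := by
        rw [map_add, map_add] at hd1
        linear_combination (norm := module) hd1 - hτw1
      have f2 : π (τ w) = (d2 - l0) • π w2 := by
        rw [map_add, map_add] at hd2
        linear_combination (norm := module) hd2 - hτw2
      have : (d1 - l0) • π w1 + (-(d2 - l0)) • π w2 = 0 := by
        linear_combination (norm := module) f2 - f1
      have := hpair _ _ this
      rw [f1, this.1, zero_smul, h0, smul_zero]
    · -- π w ≠ 0
      have hcases : (∀ a b : k, a • π w + b • π w1 = 0 → a = 0 ∧ b = 0) ∨
          (∀ a b : k, a • π w + b • π w2 = 0 → a = 0 ∧ b = 0) := by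
        by_contra hboth
        push_neg at hboth
        obtain ⟨h1, h2⟩ := hboth
        obtain ⟨a1, b1, hab1, hne1⟩ := h1
        obtain ⟨a2, b2, hab2, hne2⟩ := h2
        have hb1 : b1 ≠ 0 := by
          intro hb
          rw [hb, zero_smul, add_zero] at hab1
          have ha : a1 = 0 := by
            by_contra ha
            exact h0 (by simpa [ha] using congrArg (fun z => a1⁻¹ • z) hab1)
          exact hne1 ha hb
        have hb2 : b2 ≠ 0 := by
          intro hb
          rw [hb, zero_smul, add_zero] at hab2
          have ha : a2 = 0 := by
            by_contra ha
            exact h0 (by simpa [ha] using congrArg (fun z => a2⁻¹ • z) hab2)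
          exact hne2 ha hb
        -- π w1 = δ1 • π w, π w2 = δ2 • π w
        have hδ1 : π w1 = (-(b1⁻¹ * a1)) • π w := by
          have : b1 • π w1 = -(a1 • π w) := by
            rw [eq_neg_iff_add_eq_zero, add_comm]; exact hab1
          have := congrArg (fun z => b1⁻¹ • z) this
          simpa [smul_smul, inv_mul_cancel₀ hb1, neg_smul, mul_assoc] using this
        have hδ2 : π w2 = (-(b2⁻¹ * a2)) • π w := by
          have : b2 • π w2 = -(a2 • π w) := by
            rw [eq_neg_iff_add_eq_zero, add_comm]; exact hab2
          have := congrArg (fun z => b2⁻¹ • z) this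
          simpa [smul_smul, inv_mul_cancel₀ hb2, neg_smul, mul_assoc] using this
        set δ1 := -(b1⁻¹ * a1)
        set δ2 := -(b2⁻¹ * a2)
        have hδ1n : δ1 ≠ 0 := by
          intro h
          rw [h, zero_smul] at hδ1
          exact hw1n hδ1
        have : δ2 • π w1 + (-δ1) • π w2 = 0 := by
          linear_combination (norm := module) δ2 • hδ1 - δ1 • hδ2
        exact hδ1n (neg_eq_zero.1 (hpair _ _ this).2)
      rcases hcases with hc | hc
      · exact hstep w1 w hτw1 hc
      · exact hstep w2 w hτw2 hc
  refine ⟨l0, ?_⟩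
  rintro z hz
  obtain ⟨w, rfl⟩ := hz
  have : π ((τ - l0 • 1) w) = 0 := by
    have : (τ - l0 • (1 : Module.End k W)) w = τ w - l0 • w := by
      simp [LinearMap.sub_apply]
    rw [this, map_sub, map_smul, main w, sub_self]
  exact (hπ0 _).1 this

end Aux

section Main

variable {k : Type*} [Field k] [Infinite k] {W : Type*} [AddCommGroup W] [Module k W]
  [FiniteDimensional k W]

theorem main_step (τ : Module.End k W) (n : ℕ)
    (hrank : ∀ l : k, n ≤ finrank k (LinearMap.range (τ - l • 1)))
    (hm : 2 * n ≤ finrank k W) :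
    ∀ j, j ≤ n → ∃ v : Fin j → W,
      (∀ a b : Fin j → k, ∑ i, a i • v i + ∑ i, b i • τ (v i) = 0 →
        (∀ i, a i = 0) ∧ (∀ i, b i = 0)) ∧
      (∀ l : k, min (finrank k W) (j + finrank k (LinearMap.range (τ - l • 1)))
        ≤ finrank k ↥(span k (Set.range v ∪ Set.range (τ ∘ v)) ⊔ LinearMap.range (τ - l • 1))) := by
  intro j
  induction j with
  | zero =>
    intro _
    refine ⟨Fin.elim0, fun a b _ => ⟨fun i => i.elim0, fun i => i.elim0⟩, ?_⟩
    intro l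
    have h1 : (Set.range (Fin.elim0 : Fin 0 → W)) = ∅ := Set.range_eq_empty _
    have h2 : (Set.range (τ ∘ (Fin.elim0 : Fin 0 → W))) = ∅ := Set.range_eq_empty _
    rw [h1, h2, Set.empty_union, Submodule.span_empty, bot_sup_eq, Nat.zero_add]
    exact min_le_right _ _
  | succ j ih =>
    intro hj1
    obtain ⟨v, hindep, hinv⟩ := ih (by omega)
    classical
    set U := span k (Set.range v ∪ Set.range (τ ∘ v)) with hUdef
    have hUcard : finrank k U ≤ 2 * j := by
      have hle := finrank_range_le_card (R := k) (M := W) (Sum.elim v (τ ∘ v))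
      rw [Set.Sum.elim_range] at hle
      simpa [Set.finrank, two_mul, hUdef] using hle
    -- (1) there is a vector whose pair is independent modulo U
    have hex : ∃ w : W, ∀ a b : k, a • w + b • τ w ∈ U → a = 0 ∧ b = 0 := by
      by_contra hno
      push_neg at hno
      have hdep : ∀ w : W, ∃ a b : k, (a ≠ 0 ∨ b ≠ 0) ∧ a • w + b • τ w ∈ U := by
        intro w
        obtain ⟨a, b, hmem, hne⟩ := hno w
        exact ⟨a, b, by tauto, hmem⟩
      obtain ⟨l0, hl0⟩ := lemA τ U (by omega) hdep
      have h1 := hinv l0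
      have h2 : U ⊔ LinearMap.range (τ - l0 • 1) = U := sup_eq_left.2 hl0
      rw [h2] at h1
      have h3 := hrank l0
      have h4 : 2 * j + 1 ≤ min (finrank k W) (j + finrank k ↥(LinearMap.range (τ - l0 • 1))) :=
        le_min (by omega) (by omega)
      have h5 := le_trans h4 h1
      omega
    obtain ⟨w₀, hw₀⟩ := hex
    -- finite set of "dangerous" eigenvalues
    have hfinΛ : {l : k | U ⊔ LinearMap.range (τ - l • 1) ≠ ⊤}.Finite := by
      apply Set.Finite.subset (Module.End.finite_hasEigenvalue τ)
      intro l hl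
      have hrangene : LinearMap.range (τ - l • 1) ≠ ⊤ := by
        intro he; exact hl (by rw [he, sup_top_eq])
      have hker : LinearMap.ker (τ - l • 1) ≠ ⊥ := by
        intro hk
        have hsum := LinearMap.finrank_range_add_finrank_ker (τ - l • 1)
        rw [hk, finrank_bot, add_zero] at hsum
        exact hrangene (Submodule.eq_top_of_finrank_eq hsum)
      obtain ⟨x, hx, hx0⟩ := (Submodule.ne_bot_iff _).1 hker
      rw [LinearMap.mem_ker] at hx
      have hτx : τ x = l • x := by
        rwa [LinearMap.sub_apply, LinearMap.smul_apply, Module.End.one_apply,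
          sub_eq_zero] at hx
      have heig : Module.End.eigenspace τ l ≠ ⊥ := by
        rw [Submodule.ne_bot_iff]
        exact ⟨x, Module.End.mem_eigenspace_iff.2 hτx, hx0⟩
      exact Module.End.hasEigenvalue_iff.2 heig
    set Λ := hfinΛ.toFinset with hΛdef
    set Y : k → Submodule k W := fun l => U ⊔ LinearMap.range (τ - l • 1) with hYdef
    set Z : k → Submodule k W := fun l => Y l ⊓ Submodule.comap τ (Y l) with hZdef
    have hZne : ∀ l ∈ Λ, Z l ≠ ⊤ := by
      intro l hl hZtop
      have hY : Y l ≠ ⊤ := by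
        have := (Set.Finite.mem_toFinset hfinΛ).1 hl
        exact this
      exact hY (top_unique (hZtop ▸ inf_le_left))
    obtain ⟨u, hu⟩ := exists_avoid (Λ.image Z) (by
      intro p hp
      obtain ⟨l, hl, rfl⟩ := Finset.mem_image.1 hp
      exact hZne l hl)
    have huZ : ∀ l ∈ Λ, u ∉ Z l := fun l hl => hu _ (Finset.mem_image_of_mem Z hl)
    -- functionals
    set π := U.mkQ with hπdef
    have hπ0 : ∀ z : W, π z = 0 ↔ z ∈ U := fun z => by
      rw [hπdef, Submodule.mkQ_apply, Submodule.Quotient.mk_eq_zero]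
    have hpair0 : ∀ a b : k, a • π w₀ + b • π (τ w₀) = 0 → a = 0 ∧ b = 0 := by
      intro a b hab
      refine hw₀ a b ((hπ0 _).1 ?_)
      rw [map_add, map_smul, map_smul]; exact hab
    have hli2 : LinearIndependent k ![π w₀, π (τ w₀)] := by
      rw [LinearIndependent.pair_iff]
      exact fun s t hst => hpair0 s t hst
    obtain ⟨f, hf1, hf0⟩ := exists_dual_fun hli2 0
    obtain ⟨g, hg1, hg0⟩ := exists_dual_fun hli2 1
    have hfx : f (π w₀) = 1 := by simpa using hf1
    have hfy : f (π (τ w₀)) = 0 := by simpa using hf0 1 (by decide)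
    have hgy : g (π (τ w₀)) = 1 := by simpa using hg1
    have hgx : g (π w₀) = 0 := by simpa using hg0 0 (by decide)
    set a := f (π u) with hadef
    set bb := g (π u) with hbbdef
    set c := f (π (τ u)) with hcdef
    set d := g (π (τ u)) with hddef
    set p : Polynomial k := Polynomial.C 1 + Polynomial.C (a + d) * Polynomial.X
      + Polynomial.C (a * d - bb * c) * Polynomial.X ^ 2 with hpdef
    have hp0 : p ≠ 0 := by
      intro hzero
      have := congrArg (fun q => Polynomial.coeff q 0) hzero
      simp [hpdef] at this
    have hpeval : ∀ t : k, p.eval t = (1 + t * a) * (1 + t * d) - (t * bb) * (t * c) := by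
      intro t
      simp [hpdef]
      ring
    have hbadA : {t : k | p.eval t = 0}.Finite := by
      have := Polynomial.finite_setOf_isRoot hp0
      simpa [Polynomial.IsRoot] using this
    have hbadB : (⋃ l ∈ Λ, {t : k | w₀ + t • u ∈ Z l}).Finite := by
      refine Set.Finite.biUnion Λ.finite_toSet (fun l hl => ?_)
      refine Set.Subsingleton.finite (fun t1 h1 t2 h2 => ?_)
      by_contra hne
      have h1' : w₀ + t1 • u ∈ Z l := h1
      have h2' : w₀ + t2 • u ∈ Z l := h2
      have hsub : (t1 - t2) • u ∈ Z l := by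
        have := Submodule.sub_mem (Z l) h1' h2'
        simpa [sub_smul] using this
      have humem : u ∈ Z l := by
        have h12 : t1 - t2 ≠ 0 := sub_ne_zero.2 hne
        simpa [smul_smul, inv_mul_cancel₀ h12] using Submodule.smul_mem (Z l) (t1 - t2)⁻¹ hsub
      exact huZ l hl humem
    obtain ⟨t, ht⟩ := ((hbadA.union hbadB).infinite_compl).nonempty
    rw [Set.mem_compl_iff, Set.mem_union] at ht
    push_neg at ht
    obtain ⟨htA, htB⟩ := ht
    set w := w₀ + t • u with hwdef
    have hΔ : p.eval t ≠ 0 := htA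
    have hwZ : ∀ l ∈ Λ, w ∉ Z l := by
      intro l hl hmem
      exact htB (Set.mem_biUnion hl hmem)
    have hπw : π w = π w₀ + t • π u := by rw [hwdef, map_add, map_smul]
    have hπτw : π (τ w) = π (τ w₀) + t • π (τ u) := by
      rw [hwdef, map_add, map_smul, map_add, map_smul]
    have hfw : f (π w) = 1 + t * a := by
      rw [hπw, map_add, map_smul, hfx, smul_eq_mul]
    have hgw : g (π w) = t * bb := by
      rw [hπw, map_add, map_smul, hgx, smul_eq_mul, zero_add]
    have hfτw : f (π (τ w)) = t * c := by
      rw [hπτw, map_add, map_smul, hfy, smul_eq_mul, zero_add]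
    have hgτw : g (π (τ w)) = 1 + t * d := by
      rw [hπτw, map_add, map_smul, hgy, smul_eq_mul]
    have hwpair : ∀ s s' : k, s • w + s' • τ w ∈ U → s = 0 ∧ s' = 0 := by
      intro s s' hmem
      have h0 : s • π w + s' • π (τ w) = 0 := by
        rw [← map_smul, ← map_smul, ← map_add]
        exact (hπ0 _).2 hmem
      have hf' : s * f (π w) + s' * f (π (τ w)) = 0 := by
        have := congrArg f h0
        simpa [map_add, map_smul, smul_eq_mul] using this
      have hg' : s * g (π w) + s' * g (π (τ w)) = 0 := by
        have := congrArg g h0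
        simpa [map_add, map_smul, smul_eq_mul] using this
      rw [hfw, hfτw] at hf'
      rw [hgw, hgτw] at hg'
      have hΔ' : (1 + t * a) * (1 + t * d) - (t * bb) * (t * c) ≠ 0 := by
        rw [← hpeval]; exact hΔ
      constructor
      · have hs : s * ((1 + t * a) * (1 + t * d) - (t * bb) * (t * c)) = 0 := by
          linear_combination (1 + t * d) * hf' - (t * c) * hg'
        exact (mul_eq_zero.1 hs).resolve_right hΔ'
      · have hs : s' * ((1 + t * a) * (1 + t * d) - (t * bb) * (t * c)) = 0 := by
          linear_combination (1 + t * a) * hg' - (t * bb) * hf'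
        exact (mul_eq_zero.1 hs).resolve_right hΔ'
    -- extend the family
    set v' : Fin (j + 1) → W := Fin.snoc v w with hv'def
    have hv'cs : ∀ i : Fin j, v' i.castSucc = v i := fun i => by
      simp [hv'def]
    have hv'last : v' (Fin.last j) = w := by simp [hv'def]
    have hvU : ∀ i, v i ∈ U := fun i => Submodule.subset_span (Or.inl ⟨i, rfl⟩)
    have hτvU : ∀ i, τ (v i) ∈ U := fun i => Submodule.subset_span (Or.inr ⟨i, rfl⟩)
    have hindep' : ∀ a' b' : Fin (j + 1) → k,
        ∑ i, a' i • v' i + ∑ i, b' i • τ (v' i) = 0 →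
        (∀ i, a' i = 0) ∧ (∀ i, b' i = 0) := by
      intro a' b' hab
      rw [Fin.sum_univ_castSucc, Fin.sum_univ_castSucc] at hab
      simp only [hv'cs, hv'last] at hab
      set x := (∑ i : Fin j, a' i.castSucc • v i) + ∑ i : Fin j, b' i.castSucc • τ (v i)
        with hxdef
      have hxU : x ∈ U := by
        refine Submodule.add_mem _ ?_ ?_
        · exact Submodule.sum_mem _ (fun i _ => Submodule.smul_mem _ _ (hvU i))
        · exact Submodule.sum_mem _ (fun i _ => Submodule.smul_mem _ _ (hτvU i))
      have key : (a' (Fin.last j) • w + b' (Fin.last j) • τ w) + x = 0 := by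
        rw [hxdef]
        linear_combination (norm := module) hab
      have hlmem : a' (Fin.last j) • w + b' (Fin.last j) • τ w ∈ U := by
        have hneg : a' (Fin.last j) • w + b' (Fin.last j) • τ w = -x :=
          eq_neg_of_add_eq_zero_left key
        rw [hneg]
        exact Submodule.neg_mem _ hxU
      have hl0 := hwpair _ _ hlmem
      have hx0 : x = 0 := by
        have hneg : x = -(a' (Fin.last j) • w + b' (Fin.last j) • τ w) :=
          eq_neg_of_add_eq_zero_right key
        rw [hneg, hl0.1, hl0.2, zero_smul, zero_smul, add_zero, neg_zero]
      have hrest := hindep (fun i => a' i.castSucc) (fun i => b' i.castSucc)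
        (by rw [← hxdef]; exact hx0)
      constructor
      · intro i
        refine Fin.lastCases hl0.1 (fun i => hrest.1 i) i
      · intro i
        refine Fin.lastCases hl0.2 (fun i => hrest.2 i) i
    have hUU' : U ≤ span k (Set.range v' ∪ Set.range (τ ∘ v')) := by
      rw [hUdef]
      apply Submodule.span_mono
      apply Set.union_subset_union
      · rintro _ ⟨i, rfl⟩
        exact ⟨i.castSucc, hv'cs i⟩
      · rintro _ ⟨i, rfl⟩
        exact ⟨i.castSucc, by simp only [Function.comp_apply, hv'cs]⟩
    set U' := span k (Set.range v' ∪ Set.range (τ ∘ v')) with hU'def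
    have hwU' : w ∈ U' := Submodule.subset_span (Or.inl ⟨Fin.last j, hv'last⟩)
    have hτwU' : τ w ∈ U' := Submodule.subset_span
      (Or.inr ⟨Fin.last j, by simp only [Function.comp_apply, hv'last]⟩)
    refine ⟨v', hindep', ?_⟩
    intro l
    rw [← hU'def]
    by_cases hYtop : U ⊔ LinearMap.range (τ - l • 1) = ⊤
    · have htop : U' ⊔ LinearMap.range (τ - l • 1) = ⊤ :=
        top_unique (hYtop ▸ sup_le_sup_right hUU' _)
      rw [htop, finrank_top]
      exact min_le_left _ _
    · have hlΛ : l ∈ Λ := (Set.Finite.mem_toFinset hfinΛ).2 hYtop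
      have hnz := hwZ l hlΛ
      have hzout : w ∉ U ⊔ LinearMap.range (τ - l • 1) ∨
          τ w ∉ U ⊔ LinearMap.range (τ - l • 1) := by
        by_contra hb
        push_neg at hb
        exact hnz (Submodule.mem_inf.2 ⟨hb.1, Submodule.mem_comap.2 hb.2⟩)
      have hlt : (U ⊔ LinearMap.range (τ - l • 1)) < (U' ⊔ LinearMap.range (τ - l • 1)) := by
        refine lt_of_le_of_ne (sup_le_sup_right hUU' _) ?_
        intro he
        rcases hzout with hz | hz
        · apply hz; rw [he]; exact Submodule.mem_sup_left hwU'
        · apply hz; rw [he]; exact Submodule.mem_sup_left hτwU'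
      have hstep := Submodule.finrank_lt_finrank_of_lt hlt
      have h1 := hinv l
      set r := finrank k (LinearMap.range (τ - l • 1)) with hrdef
      set M := finrank k W with hMdef
      rcases le_or_gt M (j + r) with hmm | hmm
      · have : min M (j + 1 + r) = M := min_eq_left (by omega)
        rw [this]
        have : min M (j + r) = M := min_eq_left hmm
        rw [this] at h1
        omega
      · have h2 : min M (j + r) = j + r := min_eq_right (by omega)
        rw [h2] at h1
        calc min M (j + 1 + r) ≤ j + 1 + r := min_le_right _ _
          _ ≤ _ := by omega

end Main

set_option maxHeartbeats 1600000 in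
theorem stmt_4 (k : Type*) [Field k] [Infinite k] (n m : ℕ) (hn : 0 < n)
    (hm : 2 * n ≤ m) (τ : Module.End k (Fin m → k))
    (h : ∀ lam : AlgebraicClosure k,
      Module.finrank (AlgebraicClosure k)
        (Module.End.eigenspace
          (LinearMap.baseChange (AlgebraicClosure k) τ) lam) ≤ m - n) :
    ∃ V : Submodule k (Fin m → k), Module.finrank k V = n ∧
      ∀ v₁ ∈ V, ∀ v₂ ∈ V, τ v₁ = v₂ → v₁ = 0 ∧ v₂ = 0 := by
  classical
  haveI hfinKW : Module.Finite (AlgebraicClosure k)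
      (TensorProduct k (AlgebraicClosure k) (Fin m → k)) :=
    Module.Finite.base_change k (AlgebraicClosure k) (Fin m → k)
  have hfr : finrank k (Fin m → k) = m := Module.finrank_fin_fun k
  have hrank : ∀ l : k, n ≤ finrank k (LinearMap.range (τ - l • 1)) := by
    intro l
    have hker : finrank k (LinearMap.ker (τ - l • 1)) ≤ m - n := by
      set d := finrank k (LinearMap.ker (τ - l • 1)) with hd
      have hle : d ≤ m - n := by
        set c := Module.finBasis k (LinearMap.ker (τ - l • 1)) with hcdef
        have hc : LinearIndependent k (fun i : Fin d => ((c i : Fin m → k))) :=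
          c.linearIndependent.map' (Submodule.subtype _) (Submodule.ker_subtype _)
        have hmem : ∀ i : Fin d, (1 : (AlgebraicClosure k)) ⊗ₜ[k] ((c i : Fin m → k)) ∈
            Module.End.eigenspace (LinearMap.baseChange (AlgebraicClosure k) τ) (algebraMap k (AlgebraicClosure k) l) := by
          intro i
          rw [Module.End.mem_eigenspace_iff]
          have hx : τ (c i : Fin m → k) = l • (c i : Fin m → k) := by
            have hmem' := (c i).2
            rw [LinearMap.mem_ker] at hmem'
            rwa [LinearMap.sub_apply, LinearMap.smul_apply, Module.End.one_apply,
              sub_eq_zero] at hmem'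
          rw [LinearMap.baseChange_tmul, hx, TensorProduct.tmul_smul, algebraMap_smul]
        have hcomp : LinearIndependent (AlgebraicClosure k) (fun i : Fin d => (1 : (AlgebraicClosure k)) ⊗ₜ[k] ((c i : Fin m → k))) := by
          rw [Fintype.linearIndependent_iff]
          intro g hg i0
          obtain ⟨φ, hφ1, hφ0⟩ := exists_dual_fun hc i0
          have happ := congrArg (LinearMap.baseChange (AlgebraicClosure k) φ) hg
          rw [map_sum, map_zero] at happ
          have hterm : ∀ i : Fin d, (LinearMap.baseChange (AlgebraicClosure k) φ)
              (g i • ((1 : (AlgebraicClosure k)) ⊗ₜ[k] ((c i : Fin m → k)))) =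
              g i • ((1 : (AlgebraicClosure k)) ⊗ₜ[k] φ ((c i : Fin m → k))) := by
            intro i
            rw [map_smul, LinearMap.baseChange_tmul]
          rw [Finset.sum_congr rfl (fun i _ => hterm i)] at happ
          have hsum : ∑ i : Fin d, g i • ((1 : (AlgebraicClosure k)) ⊗ₜ[k] φ ((c i : Fin m → k))) =
              g i0 • ((1 : (AlgebraicClosure k)) ⊗ₜ[k] (1 : k)) := by
            rw [Finset.sum_eq_single i0]
            · rw [hφ1]
            · intro i _ hi
              rw [hφ0 i hi, TensorProduct.tmul_zero, smul_zero]
            · intro habs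
              exact absurd (Finset.mem_univ i0) habs
          rw [hsum] at happ
          have h1 : (g i0) ⊗ₜ[k] (1 : k) = (0 : TensorProduct k (AlgebraicClosure k) k) := by
            rw [← happ, TensorProduct.smul_tmul', smul_eq_mul, mul_one]
          have := congrArg (TensorProduct.rid k (AlgebraicClosure k)) h1
          simpa [TensorProduct.rid_tmul] using this
        obtain ⟨P, hPeq⟩ : ∃ P, Module.End.eigenspace (LinearMap.baseChange (AlgebraicClosure k) τ)
            (algebraMap k (AlgebraicClosure k) l) = P := ⟨_, rfl⟩
        rw [hPeq] at hmem
        have hh := h (algebraMap k (AlgebraicClosure k) l)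
        rw [hPeq] at hh
        have hF : LinearIndependent (AlgebraicClosure k) (fun i : Fin d =>
            (⟨(1 : (AlgebraicClosure k)) ⊗ₜ[k] ((c i : Fin m → k)), hmem i⟩ : P)) := by
          apply LinearIndependent.of_comp (Submodule.subtype _)
          exact hcomp
        haveI hP2 : Module.Finite (AlgebraicClosure k) ↥P := inferInstance
        have hcard : Fintype.card (Fin d) ≤ finrank (AlgebraicClosure k) ↥P :=
          LinearIndependent.fintype_card_le_finrank (R := AlgebraicClosure k) (M := ↥P) hF
        rw [Fintype.card_fin] at hcard
        exact hcard.trans hh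
      exact hle
    have hsum := LinearMap.finrank_range_add_finrank_ker (τ - l • 1)
    rw [hfr] at hsum
    omega
  obtain ⟨v, hindep, -⟩ := main_step τ n hrank (by rw [hfr]; exact hm) n le_rfl
  have hli : LinearIndependent k v := by
    rw [Fintype.linearIndependent_iff]
    intro g hg
    have := hindep g 0 (by rw [hg]; simp)
    exact this.1
  refine ⟨span k (Set.range v), ?_, ?_⟩
  · rw [finrank_span_eq_card hli, Fintype.card_fin]
  · intro v₁ h₁ v₂ h₂ heq
    rw [mem_span_range_iff_exists_fun] at h₁ h₂
    obtain ⟨aa, ha⟩ := h₁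
    obtain ⟨cc, hc⟩ := h₂
    have hτ : ∑ i, aa i • τ (v i) = v₂ := by
      rw [← heq, ← ha, map_sum]
      simp [map_smul]
    have hcomb : ∑ i, (fun i => -cc i) i • v i + ∑ i, aa i • τ (v i) = 0 := by
      have h1 : ∑ i, (fun i => -cc i) i • v i = -v₂ := by
        rw [← hc, ← Finset.sum_neg_distrib]
        simp [neg_smul]
      rw [h1, hτ, neg_add_cancel]
    have hzero := hindep (fun i => -cc i) aa hcomb
    have hv1 : v₁ = 0 := by
      rw [← ha]
      apply Finset.sum_eq_zero
      intro i _
      rw [hzero.2 i, zero_smul]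
    have hv2 : v₂ = 0 := by
      rw [← hc]
      apply Finset.sum_eq_zero
      intro i _
      have hcc : cc i = 0 := by
        have := hzero.1 i
        simpa using this
      rw [hcc, zero_smul]
    exact ⟨hv1, hv2⟩
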